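/- Let M be a real symmetric n×n matrix with eigenvalues λ₁(M), …, λₙ(M) ordered so that |λ₁(M)| ≥ |λ₂(M)| ≥ … ≥ |λₙ(M)|. Then for every real n×n matrix N of rank at most k (with k ≤ n), the sum of the squared tail eigenvalues satisfies ∑_{i=k+1}^{n} λᵢ(M)² ≤ ‖M − N‖_F². -/

import Mathlib

open Matrix Finset


noncomputable section

variable {n : ℕ}

lemma exists_proj (N : Matrix (Fin n) (Fin n) ℝ) :
    ∃ P : Matrix (Fin n) (Fin n) ℝ, Pᵀ = P ∧ P * P = P ∧ N * P = 0 ∧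
      P.trace = (n - N.rank : ℕ) := by
  classical
  set K := LinearMap.ker (Matrix.toEuclideanLin N) with hK
  set m := Module.finrank ℝ K with hm
  set b := stdOrthonormalBasis ℝ K with hb
  set C : Matrix (Fin m) (Fin n) ℝ :=
    Matrix.of (fun t i => (b t : EuclideanSpace ℝ (Fin n)) i) with hC
  have hCC : C * Cᵀ = 1 := by
    ext s t
    have h2 : (inner ℝ (b s) (b t) : ℝ) = if s = t then 1 else 0 := by
      have := b.orthonormal
      rw [orthonormal_iff_ite] at this
      exact this s t
    rw [Submodule.coe_inner] at h2
    simp only [Matrix.mul_apply, Matrix.transpose_apply, hC, Matrix.of_apply,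
      Matrix.one_apply]
    have h3 : (inner ℝ ((b s : EuclideanSpace ℝ (Fin n))) ((b t : EuclideanSpace ℝ (Fin n))) : ℝ)
        = ∑ l, (b s : EuclideanSpace ℝ (Fin n)) l * (b t : EuclideanSpace ℝ (Fin n)) l := by
      rw [PiLp.inner_apply]
      simp only [RCLike.inner_apply', starRingEnd_apply, star_trivial]
    rw [h3] at h2
    rw [h2]
  have hNC : N * Cᵀ = 0 := by
    ext i t
    have hker : Matrix.toEuclideanLin N (b t : EuclideanSpace ℝ (Fin n)) = 0 :=
      (LinearMap.mem_ker).mp (b t).2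
    have : N *ᵥ (WithLp.equiv 2 (Fin n → ℝ) (b t : EuclideanSpace ℝ (Fin n))) = 0 := by
      exact (Matrix.ofLp_toEuclideanLin_apply N (b t : EuclideanSpace ℝ (Fin n))).symm.trans (by rw [hker]; rfl)
    have := congrFun this i
    simpa [Matrix.mul_apply, hC, Matrix.mulVec, dotProduct] using this
  refine ⟨Cᵀ * C, by simp [Matrix.transpose_mul], ?_, ?_, ?_⟩
  · calc Cᵀ * C * (Cᵀ * C) = Cᵀ * (C * Cᵀ) * C := by simp only [Matrix.mul_assoc]
      _ = Cᵀ * C := by rw [hCC]; simp [Matrix.mul_assoc]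
  · rw [← Matrix.mul_assoc, hNC, Matrix.zero_mul]
  · rw [← Matrix.trace_mul_comm, hCC]
    have hrank : N.rank = Module.finrank ℝ (LinearMap.range (Matrix.toEuclideanLin N)) := by
      rw [Matrix.toEuclideanLin_eq_toLin]
      exact Matrix.rank_eq_finrank_range_toLin N _ _
    have hrn := LinearMap.finrank_range_add_finrank_ker (Matrix.toEuclideanLin N)
    rw [finrank_euclideanSpace_fin, ← hK, ← hm] at hrn
    have : m = n - N.rank := by omega
    simp [Matrix.trace_one, this]


def frob (A : Matrix (Fin n) (Fin n) ℝ) : ℝ := ∑ u, ∑ v, (A u v) ^ 2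

lemma frob_eq_trace (A : Matrix (Fin n) (Fin n) ℝ) : frob A = (Aᵀ * A).trace := by
  rw [frob, Matrix.trace, Finset.sum_comm]
  simp [Matrix.mul_apply, Matrix.diag, sq]

lemma frob_nonneg (A : Matrix (Fin n) (Fin n) ℝ) : 0 ≤ frob A :=
  Finset.sum_nonneg fun u _ => Finset.sum_nonneg fun v _ => sq_nonneg _

lemma frob_proj (B P : Matrix (Fin n) (Fin n) ℝ) (hPt : Pᵀ = P) (hPP : P * P = P) :
    frob (B * P) ≤ frob B := by
  have key : ∀ Q : Matrix (Fin n) (Fin n) ℝ, Qᵀ = Q → Q * Q = Q →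
      frob (B * Q) = (Bᵀ * B * Q).trace := by
    intro Q hQt hQQ
    rw [frob_eq_trace]
    calc ((B * Q)ᵀ * (B * Q)).trace = (Q * (Bᵀ * B * Q)).trace := by
          rw [Matrix.transpose_mul, hQt]; simp only [Matrix.mul_assoc]
      _ = (Bᵀ * B * Q * Q).trace := by rw [Matrix.trace_mul_comm]
      _ = (Bᵀ * B * Q).trace := by rw [Matrix.mul_assoc, hQQ]
  have h1 : frob (B * P) = (Bᵀ * B * P).trace := key P hPt hPP
  have h2 : frob (B * (1 - P)) = (Bᵀ * B * (1 - P)).trace := by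
    refine key _ ?_ ?_
    · rw [Matrix.transpose_sub, Matrix.transpose_one, hPt]
    · rw [Matrix.mul_sub, Matrix.sub_mul, Matrix.sub_mul, hPP]
      simp
  have h3 : frob B = frob (B * P) + frob (B * (1 - P)) := by
    rw [h1, h2, ← Matrix.trace_add, ← Matrix.mul_add]
    simp [frob_eq_trace]
  linarith [frob_nonneg (B * (1 - P))]

lemma frob_conj (U X : Matrix (Fin n) (Fin n) ℝ) (hU : Uᵀ * U = 1) :
    frob (U * X * Uᵀ) = frob X := by
  rw [frob_eq_trace, frob_eq_trace]
  calc ((U * X * Uᵀ)ᵀ * (U * X * Uᵀ)).trace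
      = (U * (Xᵀ * (Uᵀ * U) * X) * Uᵀ).trace := by
        simp only [Matrix.transpose_mul, Matrix.transpose_transpose, Matrix.mul_assoc]
    _ = (Xᵀ * X).trace := by
        rw [hU, Matrix.mul_one, Matrix.trace_mul_comm, ← Matrix.mul_assoc, hU,
          Matrix.one_mul]

lemma frob_diag (lam : Fin n → ℝ) (Q : Matrix (Fin n) (Fin n) ℝ)
    (hQt : Qᵀ = Q) (hQQ : Q * Q = Q) :
    frob (Matrix.diagonal lam * Q) = ∑ i, lam i ^ 2 * Q i i := by
  have hsymm : ∀ u v, Q v u = Q u v := fun u v => by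
    conv_lhs => rw [← hQt, Matrix.transpose_apply]
  have hdiag : ∀ u, ∑ v, Q u v ^ 2 = Q u u := by
    intro u
    have h : (Q * Q) u u = Q u u := by rw [hQQ]
    rw [Matrix.mul_apply] at h
    rw [← h]
    exact Finset.sum_congr rfl fun v _ => by rw [hsymm u v]; ring
  unfold frob
  refine Finset.sum_congr rfl fun u _ => ?_
  have : ∀ v, (Matrix.diagonal lam * Q) u v = lam u * Q u v := fun v => by
    simp [Matrix.diagonal_mul]
  simp only [this, mul_pow, ← Finset.mul_sum, hdiag u]

lemma diag_bounds (Q : Matrix (Fin n) (Fin n) ℝ)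
    (hQt : Qᵀ = Q) (hQQ : Q * Q = Q) (i : Fin n) :
    0 ≤ Q i i ∧ Q i i ≤ 1 := by
  have hsymm : ∀ u v, Q v u = Q u v := fun u v => by
    conv_lhs => rw [← hQt, Matrix.transpose_apply]
  have h : (Q * Q) i i = Q i i := by rw [hQQ]
  rw [Matrix.mul_apply] at h
  have h2 : ∑ v, Q i v ^ 2 = Q i i := by
    rw [← h]; exact Finset.sum_congr rfl fun v _ => by rw [hsymm i v]; ring
  have h3 : Q i i ^ 2 ≤ Q i i := by
    have := Finset.single_le_sum (f := fun v => Q i v ^ 2)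
      (fun v _ => sq_nonneg (Q i v)) (Finset.mem_univ i)
    rw [h2] at this
    exact this
  constructor <;> nlinarith [sq_nonneg (Q i i)]

lemma comb (k : ℕ) (hk : k ≤ n) (lam : Fin n → ℝ)
    (hord : ∀ i j : Fin n, i ≤ j → |lam j| ≤ |lam i|)
    (q : Fin n → ℝ) (hq0 : ∀ i, 0 ≤ q i) (hq1 : ∀ i, q i ≤ 1)
    (hsum : ((n - k : ℕ) : ℝ) ≤ ∑ i, q i) :
    ∑ i ∈ Finset.univ.filter (fun i : Fin n => k ≤ (i : ℕ)), lam i ^ 2 ≤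
      ∑ i, lam i ^ 2 * q i := by
  rcases Nat.eq_or_lt_of_le hk with rfl | hkn
  · have h0 : Finset.univ.filter (fun i : Fin k => k ≤ (i : ℕ)) = ∅ := by
      apply Finset.filter_false_of_mem; intro i _; have := i.isLt; omega
    rw [h0, Finset.sum_empty]
    exact Finset.sum_nonneg fun i _ => mul_nonneg (sq_nonneg _) (hq0 i)
  · set κ : Fin n := ⟨k, hkn⟩ with hκ
    set c : ℝ := lam κ ^ 2 with hc
    set S := Finset.univ.filter (fun i : Fin n => k ≤ (i : ℕ)) with hS
    have hSIci : S = Finset.Ici κ := by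
      ext i; simp [hS, Fin.le_def, hκ]
    have hcard : (S.card : ℝ) = (n - k : ℕ) := by
      rw [hSIci, Fin.card_Ici]
    have hsq : ∀ i j : Fin n, i ≤ j → lam j ^ 2 ≤ lam i ^ 2 := fun i j hij => by
      have := hord i j hij
      nlinarith [abs_nonneg (lam j), sq_abs (lam i), sq_abs (lam j)]
    have hsplit := Finset.sum_filter_add_sum_filter_not Finset.univ
      (fun i : Fin n => k ≤ (i : ℕ)) (fun i => lam i ^ 2 * q i)
    set T := Finset.univ.filter (fun i : Fin n => ¬ k ≤ (i : ℕ)) with hT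
    -- key chain
    have h1 : ∑ i ∈ S, lam i ^ 2 * (1 - q i) ≤ c * ∑ i ∈ S, (1 - q i) := by
      rw [Finset.mul_sum]
      refine Finset.sum_le_sum fun i hi => ?_
      have hki : κ ≤ i := by
        rw [hS] at hi; simp at hi; exact Fin.mk_le_of_le_val hi
      have := hsq κ i hki
      have := hq1 i
      nlinarith
    have hsplitq := Finset.sum_filter_add_sum_filter_not Finset.univ
      (fun i : Fin n => k ≤ (i : ℕ)) q
    have h2 : ∑ i ∈ S, (1 - q i) ≤ ∑ i ∈ T, q i := by
      rw [Finset.sum_sub_distrib, Finset.sum_const, nsmul_eq_mul, mul_one]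
      have : ∑ i ∈ S, q i + ∑ i ∈ T, q i = ∑ i, q i := hsplitq
      rw [hcard]
      linarith
    have h3 : c * ∑ i ∈ T, q i ≤ ∑ i ∈ T, lam i ^ 2 * q i := by
      rw [Finset.mul_sum]
      refine Finset.sum_le_sum fun i hi => ?_
      have hik : i ≤ κ := by
        rw [hT] at hi; simp at hi
        exact le_of_lt (Fin.mk_lt_of_lt_val hi : i < κ)
      have := hsq i κ hik
      have := hq0 i
      nlinarith
    have hc0 : 0 ≤ c := sq_nonneg _
    have h4 : ∑ i ∈ S, lam i ^ 2 - ∑ i ∈ S, lam i ^ 2 * q i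
        = ∑ i ∈ S, lam i ^ 2 * (1 - q i) := by
      rw [← Finset.sum_sub_distrib]
      exact Finset.sum_congr rfl fun i _ => by ring
    have hST : ∑ i ∈ S, lam i ^ 2 * q i + ∑ i ∈ T, lam i ^ 2 * q i
        = ∑ i, lam i ^ 2 * q i := hsplit
    have hcm : c * ∑ i ∈ S, (1 - q i) ≤ c * ∑ i ∈ T, q i :=
      mul_le_mul_of_nonneg_left h2 hc0
    linarith


end

/-- For a real symmetric `n × n` matrix `M` with eigenvalues `lam`
(given by an orthogonal eigendecomposition) ordered by decreasing absolute value,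
and any matrix `N` of rank at most `k ≤ n`, the sum of the squared tail
eigenvalues `∑_{i=k+1}^n λ_i(M)²` is at most the squared Frobenius norm `‖M - N‖_F²`. -/
theorem tail_eigenvalues_le_low_rank_approx
    (n k : ℕ) (hk : k ≤ n)
    (M N : Matrix (Fin n) (Fin n) ℝ)
    (hM : M.IsSymm)
    (lam : Fin n → ℝ) (U : Matrix (Fin n) (Fin n) ℝ)
    (hU : Uᵀ * U = 1)
    (hdecomp : M = U * Matrix.diagonal lam * Uᵀ)
    (hord : ∀ i j : Fin n, i ≤ j → |lam j| ≤ |lam i|)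
    (hN : N.rank ≤ k) :
    ∑ i ∈ Finset.univ.filter (fun i : Fin n => k ≤ (i : ℕ)), (lam i) ^ 2 ≤
      ∑ u, ∑ v, (M u v - N u v) ^ 2 := by
  obtain ⟨P, hPt, hPP, hNP, htr⟩ := exists_proj N
  have hUU : U * Uᵀ = 1 := mul_eq_one_comm.mp hU
  set Q := Uᵀ * P * U with hQ
  have hQt : Qᵀ = Q := by
    rw [hQ]
    simp only [Matrix.transpose_mul, Matrix.transpose_transpose, hPt, Matrix.mul_assoc]
  have hQQ : Q * Q = Q := by
    rw [hQ]
    calc Uᵀ * P * U * (Uᵀ * P * U) = Uᵀ * (P * (U * Uᵀ) * P) * U := by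
          simp only [Matrix.mul_assoc]
      _ = Uᵀ * (P * P) * U := by rw [hUU, Matrix.mul_one]
      _ = Uᵀ * P * U := by rw [hPP]
  have hQtr : Q.trace = P.trace := by
    rw [hQ, Matrix.trace_mul_comm, ← Matrix.mul_assoc, hUU, Matrix.one_mul]
  -- diagonal entries of Q
  have hq0 : ∀ i, 0 ≤ Q i i := fun i => (diag_bounds Q hQt hQQ i).1
  have hq1 : ∀ i, Q i i ≤ 1 := fun i => (diag_bounds Q hQt hQQ i).2
  have hqsum : ((n - k : ℕ) : ℝ) ≤ ∑ i, Q i i := by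
    have h1 : (∑ i, Q i i) = Q.trace := rfl
    rw [h1, hQtr, htr]
    exact_mod_cast Nat.sub_le_sub_left hN n
  have step1 : ∑ i ∈ Finset.univ.filter (fun i : Fin n => k ≤ (i : ℕ)), (lam i) ^ 2 ≤
      ∑ i, lam i ^ 2 * Q i i :=
    comb k hk lam hord (fun i => Q i i) hq0 hq1 hqsum
  have step2 : U * (Matrix.diagonal lam * Q) * Uᵀ = M * P := by
    rw [hdecomp, hQ]
    simp only [Matrix.mul_assoc]
    rw [hUU, Matrix.mul_one]
  have step3 : ∑ i, lam i ^ 2 * Q i i = frob (M * P) := by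
    rw [← step2, frob_conj _ _ hU, frob_diag lam Q hQt hQQ]
  have step4 : (M - N) * P = M * P := by
    rw [Matrix.sub_mul, hNP, sub_zero]
  have step5 : frob (M * P) ≤ frob (M - N) := by
    rw [← step4]; exact frob_proj (M - N) P hPt hPP
  have step6 : frob (M - N) = ∑ u, ∑ v, (M u v - N u v) ^ 2 := by
    simp [frob, Matrix.sub_apply]
  linarith
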